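/- Let c be a real number and let u₊, u₋ be 2×2 complex matrices. Suppose P, Q : ℤ → Matrix(2,2,ℂ) satisfy the second-difference recursions P(k+1) − 2P(k) + P(k−1) = 0 and Q(k+1) − 2Q(k) + Q(k−1) = 0 for all k ∈ ℤ, together with the adjoint relation (P k)ᴴ = −Q(k+2) for all k, and the initial conditions P 0 = c • u₊ and Q 0 = c • u₋. Then for all k ∈ ℤ: P k = c • ((k/2) • (u₊ + u₋ᴴ) + u₊) and Q k = c • ((−k/2) • (u₋ + u₊ᴴ) + u₋). -/

import Mathlib

open Matrix

lemma affine_of_second_diff {M : Type*} [AddCommGroup M] (f : ℤ → M)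
    (h : ∀ k : ℤ, f (k + 1) - 2 • f k + f (k - 1) = 0) :
    ∀ k : ℤ, f k = f 0 + k • (f 1 - f 0) := by
  have hd : ∀ k : ℤ, f (k + 1) - f k = f 1 - f 0 := by
    intro k
    induction k using Int.induction_on with
    | zero => simp
    | succ n ih =>
      have h3 := h (n + 1)
      rw [show ((n : ℤ) + 1 - 1) = n by ring, two_smul] at h3
      have h2 : f (n + 1 + 1) - f (n + 1) = f (n + 1) - f n := by
        have : f (n + 1 + 1) - f (n + 1) - (f (n + 1) - f n) = 0 := by
          rw [← h3]; abel
        exact sub_eq_zero.mp this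
      rw [h2, ih]
    | pred n ih =>
      have h3 := h (-n)
      rw [show ((-n : ℤ) - 1) = -(n + 1) by ring, two_smul] at h3
      rw [show (-(n : ℤ) - 1 + 1) = -n + 1 - 1 by ring,
        show (-(n : ℤ) - 1) = -(n + 1) by ring,
        show (-(n : ℤ) + 1 - 1) = -n by ring]
      have h2 : f (-n + 1) - f (-n) - (f (-n) - f (-(n + 1 : ℤ))) = 0 := by
        rw [← h3]; abel
      rw [← sub_eq_zero.mp h2, ih]
  intro k
  induction k using Int.induction_on with
  | zero => simp
  | succ n ih =>
    have h2 : f (n + 1) = f n + (f 1 - f 0) := by rw [← hd n]; abel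
    rw [h2, ih, add_smul, one_smul]; abel
  | pred n ih =>
    have h2 := hd (-(n + 1 : ℤ))
    rw [show (-(n + 1 : ℤ) + 1) = -n by ring] at h2
    have h4 : f (-(n + 1 : ℤ)) = f (-n) - (f 1 - f 0) := by rw [← h2]; abel
    rw [show (-(n : ℤ) - 1) = -(n + 1) by ring, h4, ih,
      show (-(n + 1 : ℤ)) = -n - 1 by ring, sub_smul, one_smul]; abel

/-- **Solution of the order-one recursion for the raising and lowering operators of the
de Sitter spectral quadruple.**
If `P, Q : ℤ → Matrix (Fin 2) (Fin 2) ℂ` satisfy the second-difference recursions,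
the adjoint relation `(P k)ᴴ = −Q (k+2)` and the initial conditions `P 0 = c • u₊`,
`Q 0 = c • u₋`, then `P k = c • ((k/2) • (u₊ + u₋ᴴ) + u₊)` and
`Q k = c • ((−k/2) • (u₋ + u₊ᴴ) + u₋)` for all `k ∈ ℤ`. -/
theorem order_one_recursion_solution (c : ℝ) (uplus uminus : Matrix (Fin 2) (Fin 2) ℂ)
    (P Q : ℤ → Matrix (Fin 2) (Fin 2) ℂ)
    (hP : ∀ k : ℤ, P (k + 1) - 2 • P k + P (k - 1) = 0)
    (hQ : ∀ k : ℤ, Q (k + 1) - 2 • Q k + Q (k - 1) = 0)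
    (hadj : ∀ k : ℤ, (P k)ᴴ = -Q (k + 2))
    (hP0 : P 0 = c • uplus) (hQ0 : Q 0 = c • uminus) :
    ∀ k : ℤ,
      P k = c • (((k : ℝ) / 2) • (uplus + uminusᴴ) + uplus) ∧
      Q k = c • ((-(k : ℝ) / 2) • (uminus + uplusᴴ) + uminus) := by
  have aP := affine_of_second_diff P hP
  have aQ := affine_of_second_diff Q hQ
  set dP := P 1 - P 0 with hdP
  set dQ := Q 1 - Q 0 with hdQ
  have h1 := hadj (-2)
  have h2 := hadj (-1)
  rw [show (-2 + 2 : ℤ) = 0 by ring] at h1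
  rw [show (-1 + 2 : ℤ) = 1 by ring] at h2
  rw [aP (-2), hP0, hQ0] at h1
  rw [aP (-1), aQ 1, hP0, hQ0] at h2
  rw [conjTranspose_add, conjTranspose_zsmul, conjTranspose_smul] at h1 h2
  simp only [star_trivial] at h1 h2
  -- h1 : c • uplusᴴ + (-2 : ℤ) • dPᴴ = -(c • uminus)
  -- h2 : c • uplusᴴ + (-1 : ℤ) • dPᴴ = -(c • uminus + (1 : ℤ) • dQ)
  have e1 : (2 : ℤ) • dPᴴ = c • uplusᴴ + c • uminus := by
    have h1' := sub_eq_zero.mpr h1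
    apply sub_eq_zero.mp
    have key : (2 : ℤ) • dPᴴ - (c • uplusᴴ + c • uminus)
        = -(c • uplusᴴ + (-2 : ℤ) • dPᴴ - -(c • uminus)) := by module
    rw [key, h1', neg_zero]
  have hdP2 : dPᴴ = (c / 2 : ℝ) • (uplusᴴ + uminus) := by
    have key : dPᴴ = (1 / 2 : ℝ) • ((2 : ℤ) • dPᴴ) := by module
    rw [key, e1]; module
  have hdPv : dP = (c / 2 : ℝ) • (uplus + uminusᴴ) := by
    calc dP = dPᴴᴴ := (conjTranspose_conjTranspose _).symm
    _ = ((c / 2 : ℝ) • (uplusᴴ + uminus))ᴴ := by rw [hdP2]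
    _ = (c / 2 : ℝ) • (uplus + uminusᴴ) := by
        rw [conjTranspose_smul, conjTranspose_add, conjTranspose_conjTranspose,
          star_trivial]
  have hdQv : dQ = (-(c / 2) : ℝ) • (uminus + uplusᴴ) := by
    have h2' := sub_eq_zero.mpr h2
    apply sub_eq_zero.mp
    have key : dQ - (-(c / 2) : ℝ) • (uminus + uplusᴴ)
        = (c • uplusᴴ + (-1 : ℤ) • dPᴴ - -(c • uminus + (1 : ℤ) • dQ))
          + (dPᴴ - (c / 2 : ℝ) • (uplusᴴ + uminus)) := by module
    rw [key, h2', hdP2, zero_add]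
    simp
  intro k
  constructor
  · rw [aP k, hP0, hdPv, ← Int.cast_smul_eq_zsmul ℝ]
    module
  · rw [aQ k, hQ0, hdQv, ← Int.cast_smul_eq_zsmul ℝ]
    module
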